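/- arXiv:1311.2230 — 2 statements merged into one kernel-verified Lean document; each statement's English description precedes it below -/
import Mathlib

section
/- Let A = (a_0, …, a_m) be real numbers with associated characteristic polynomial P_A(x) = Σ_{i=0}^m a_i x^{m−i}. If w ≠ 0 satisfies P_A(w) = 0 and P_A(w⁻¹) = 0, then the A-Chebyshev polynomial T_{n,A}(x) = Σ_{i=0}^m a_i T_{n−i}(x) vanishes at x = (w + w⁻¹)/2 for every n ≥ m. -/
open Polynomial Polynomial.Chebyshev Finset

lemma T_eval_half_add_inv (w : ℝ) (hw : w ≠ 0) (k : ℕ) :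
    (Chebyshev.T ℝ (k : ℤ)).eval ((w + w⁻¹) / 2) = (w ^ k + w⁻¹ ^ k) / 2 := by
  induction k using Nat.twoStepInduction with
  | zero => simp
  | one => simp [Chebyshev.T_one]
  | more k ih1 ih2 =>
    have : ((k + 2 : ℕ) : ℤ) = (k : ℤ) + 2 := by push_cast; ring
    rw [this, Chebyshev.T_add_two]
    push_cast at ih2
    simp only [eval_sub, eval_mul, eval_ofNat, eval_X, ih1, ih2]
    field_simp
    have hw' : w * w⁻¹ = 1 := mul_inv_cancel₀ hw
    linear_combination (w * w⁻¹ ^ k - w⁻¹ * w⁻¹ ^ k) * hw'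

theorem aChebyshev_root_of_reciprocal_roots (m : ℕ) (a : ℕ → ℝ) (w : ℝ) (hw : w ≠ 0)
    (h1 : ∑ i ∈ range (m + 1), a i * w ^ (m - i) = 0)
    (h2 : ∑ i ∈ range (m + 1), a i * w⁻¹ ^ (m - i) = 0)
    (n : ℕ) (hn : m ≤ n) :
    ∑ i ∈ range (m + 1), a i * (Chebyshev.T ℝ (n - i)).eval ((w + w⁻¹) / 2) = 0 := by
  have key : ∀ i ∈ range (m + 1),
      a i * (Chebyshev.T ℝ (n - i)).eval ((w + w⁻¹) / 2) =
      w ^ (n - m) / 2 * (a i * w ^ (m - i)) + w⁻¹ ^ (n - m) / 2 * (a i * w⁻¹ ^ (m - i)) := by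
    intro i hi
    have him : i ≤ m := Nat.lt_succ_iff.mp (mem_range.mp hi)
    have hcast : (n : ℤ) - (i : ℤ) = ((n - i : ℕ) : ℤ) := by omega
    rw [hcast, T_eval_half_add_inv w hw]
    have hsplit : n - i = (n - m) + (m - i) := by omega
    rw [hsplit, pow_add, pow_add]
    ring
  rw [Finset.sum_congr rfl key, Finset.sum_add_distrib, ← Finset.mul_sum, ← Finset.mul_sum,
    h1, h2]
  ring
end

section
/- Let A = (a_0, …, a_m) be real numbers and T_{n,A}(x) = Σ_{i=0}^m a_i T_{n−i}(x). Then for every x ∈ [−1, 1] and n ≥ m, T_{n,A}(x)² ≤ Σ_{i=0}^m Σ_{k=0}^m a_i a_k T_{|i−k|}(x). In particular the right-hand side, the squared envelope E_A(x)², is nonnegative on [−1, 1] and independent of n. -/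
open Polynomial Polynomial.Chebyshev Finset

theorem aChebyshev_sq_le_envelope_sq (m : ℕ) (a : ℕ → ℝ) (x : ℝ)
    (hx : x ∈ Set.Icc (-1 : ℝ) 1) (n : ℕ) (hn : m ≤ n) :
    (∑ i ∈ range (m + 1), a i * (Chebyshev.T ℝ (n - i)).eval x) ^ 2 ≤
      ∑ i ∈ range (m + 1), ∑ k ∈ range (m + 1),
        a i * a k * (Chebyshev.T ℝ |(i : ℤ) - (k : ℤ)|).eval x := by
  obtain ⟨hx1, hx2⟩ := hx
  set θ := Real.arccos x with hθ
  have hcos : Real.cos θ = x := Real.cos_arccos hx1 hx2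
  have key : ∀ j : ℤ, (Chebyshev.T ℝ j).eval x = Real.cos ((j : ℝ) * θ) := by
    intro j; rw [← hcos, Polynomial.Chebyshev.T_real_cos]
  set c := ∑ i ∈ range (m + 1), a i * Real.cos ((i : ℝ) * θ) with hc
  set s := ∑ i ∈ range (m + 1), a i * Real.sin ((i : ℝ) * θ) with hs
  have h1 : (∑ i ∈ range (m + 1), a i * (Chebyshev.T ℝ (n - i)).eval x)
      = Real.cos ((n : ℝ) * θ) * c + Real.sin ((n : ℝ) * θ) * s := by
    rw [hc, hs, Finset.mul_sum, Finset.mul_sum, ← Finset.sum_add_distrib]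
    refine Finset.sum_congr rfl fun i hi => ?_
    rw [key]
    push_cast
    rw [sub_mul, Real.cos_sub]
    ring
  have habs : ∀ i k : ℕ, (Chebyshev.T ℝ |(i : ℤ) - (k : ℤ)|).eval x
      = Real.cos ((i : ℝ) * θ) * Real.cos ((k : ℝ) * θ)
        + Real.sin ((i : ℝ) * θ) * Real.sin ((k : ℝ) * θ) := by
    intro i k
    rw [key, ← Real.cos_sub, ← sub_mul]
    rcases abs_choice ((i : ℤ) - (k : ℤ)) with h | h
    · rw [h]; push_cast; ring_nf
    · rw [h]; push_cast; rw [neg_mul, Real.cos_neg]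
  have h2 : (∑ i ∈ range (m + 1), ∑ k ∈ range (m + 1),
      a i * a k * (Chebyshev.T ℝ |(i : ℤ) - (k : ℤ)|).eval x) = c ^ 2 + s ^ 2 := by
    simp only [habs]
    rw [hc, hs, sq, sq, Finset.sum_mul_sum, Finset.sum_mul_sum, ← Finset.sum_add_distrib]
    refine Finset.sum_congr rfl fun i _ => ?_
    rw [← Finset.sum_add_distrib]
    refine Finset.sum_congr rfl fun k _ => ?_
    ring
  rw [h1, h2]
  nlinarith [sq_nonneg (Real.sin ((n : ℝ) * θ) * c - Real.cos ((n : ℝ) * θ) * s),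
    Real.sin_sq_add_cos_sq ((n : ℝ) * θ)]
end
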